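/- Let k ≥ 1 and let m₁,…,m_{2k} be positive integers with m₁ = 2, m₂ ≡ 2 (mod 4), and m_l ≡ 0 (mod 4) for l = 3,…,2k. Let Ĝ = Γ(m₁−1, m₂, m₃, …, m_{2k}) (the graph obtained from Γ(m₁,…,m_{2k}) by deleting one vertex of the first block), and let Û_t = exp(−itL(Ĝ)). Then for all distinct vertices i, j of Ĝ and all t ∈ ℝ, |(Û_t)_{i,j}| ≤ 2/(m₂+1). -/

import Mathlib

open Finset Matrix

/-- `sig m l = m 1 + ⋯ + m l` (block sizes `m` are indexed starting from 1). -/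
def sig (m : ℕ → ℕ) (l : ℕ) : ℕ := ∑ i ∈ Finset.Icc 1 l, m i

/-- The (1-based) index of the block containing the (0-based) vertex `v`:
`blk r m v = b` iff `sig m (b-1) ≤ v < sig m b`. -/
def blk (r : ℕ) (m : ℕ → ℕ) (v : ℕ) : ℕ :=
  1 + ((Finset.Icc 1 r).filter (fun l => sig m l ≤ v)).card

/-- `Γ(m₁,…,m_r) = ((((O_{m₁} ∨ K_{m₂}) ∪ O_{m₃}) ∨ K_{m₄}) ⋯ )`:
the odd-indexed blocks are added as sets of isolated vertices (disjoint union with `O_{m_l}`)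
and the even-indexed blocks are cliques joined to everything already present.  Hence two
distinct vertices are adjacent iff the larger of their two block indices is even.  Vertices
are labelled `0,…,n-1` (`n = m₁+⋯+m_r`), block `B₁` first, then `B₂`, etc. -/
def GammaEven (r : ℕ) (m : ℕ → ℕ) : SimpleGraph (Fin (sig m r)) where
  Adj u v := u ≠ v ∧ (max (blk r m (u : ℕ)) (blk r m (v : ℕ))) % 2 = 0
  symm := by
    constructor
    intro u v h
    exact ⟨h.1.symm, by rw [max_comm]; exact h.2⟩
  loopless := by constructor; intro u h; exact h.1 rfl

instance (r : ℕ) (m : ℕ → ℕ) : DecidableRel (GammaEven r m).Adj := fun u v =>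
  decidable_of_iff (u ≠ v ∧ (max (blk r m (u : ℕ)) (blk r m (v : ℕ))) % 2 = 0) Iff.rfl

/-- `U_t = exp(−itL)`, where `L` is the Laplacian matrix of `G` (diagonal entries the
degrees, entry `−1` for each edge, `0` otherwise). -/
noncomputable def Ut {n : ℕ} (G : SimpleGraph (Fin n)) [DecidableRel G.Adj] (t : ℝ) :
    Matrix (Fin n) (Fin n) ℂ :=
  NormedSpace.exp ((-(Complex.I * (t : ℂ))) • G.lapMatrix ℂ)

/-- The transfer probability `p_G(i,j,t) = |(U_t)_{j,i}|²`. -/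
noncomputable def transferProb {n : ℕ} (G : SimpleGraph (Fin n)) [DecidableRel G.Adj]
    (i j : Fin n) (t : ℝ) : ℝ :=
  ‖Ut G t j i‖ ^ 2

namespace St17

theorem sig_zero (m' : ℕ → ℕ) : sig m' 0 = 0 := by simp [sig]

theorem sig_mono (m' : ℕ → ℕ) : Monotone (sig m') := fun a b h =>
  Finset.sum_le_sum_of_subset (Finset.Icc_subset_Icc_right h)

theorem sig_succ (m' : ℕ → ℕ) (b : ℕ) : sig m' (b + 1) = sig m' b + m' (b + 1) := by
  unfold sig
  rw [Finset.sum_Icc_succ_top (Nat.le_add_left 1 b)]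

theorem sig_one (m' : ℕ → ℕ) : sig m' 1 = m' 1 := by simp [sig]

theorem sig_pos (m' : ℕ → ℕ) (h1 : m' 1 = 1) {b : ℕ} (hb : 1 ≤ b) : 1 ≤ sig m' b := by
  have := sig_mono m' hb
  rw [sig_one, h1] at this
  exact this

theorem sig_ne (m' : ℕ → ℕ) (h1 : m' 1 = 1) {b : ℕ} (hb : 1 ≤ b) : ((sig m' b : ℂ)) ≠ 0 := by
  have := sig_pos m' h1 hb
  exact Nat.cast_ne_zero.mpr (by omega)

theorem blk_pos (r : ℕ) (m' : ℕ → ℕ) (v : ℕ) : 1 ≤ blk r m' v := Nat.le_add_right 1 _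

theorem blk_le_iff {r : ℕ} {m' : ℕ → ℕ} (u : Fin (sig m' r)) (b : ℕ) :
    blk r m' (u : ℕ) ≤ b ↔ (u : ℕ) < sig m' b := by
  constructor
  · intro h
    by_contra hc
    push_neg at hc
    have hur : (u : ℕ) < sig m' r := u.isLt
    have hbr : b ≤ r := by
      by_contra hbr
      push_neg at hbr
      have := sig_mono m' hbr.le
      omega
    have hsub : Finset.Icc 1 b ⊆ (Finset.Icc 1 r).filter (fun l => sig m' l ≤ (u : ℕ)) := by
      intro l hl
      simp only [Finset.mem_Icc, Finset.mem_filter] at *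
      exact ⟨⟨hl.1, le_trans hl.2 hbr⟩, le_trans (sig_mono m' hl.2) hc⟩
    have hcard := Finset.card_le_card hsub
    rw [Nat.card_Icc] at hcard
    unfold blk at h
    omega
  · intro h
    have hb1 : 1 ≤ b := by
      by_contra hb
      push_neg at hb
      interval_cases b
      rw [sig_zero] at h
      omega
    have hsub : (Finset.Icc 1 r).filter (fun l => sig m' l ≤ (u : ℕ)) ⊆ Finset.Icc 1 (b - 1) := by
      intro l hl
      simp only [Finset.mem_Icc, Finset.mem_filter] at *
      refine ⟨hl.1.1, ?_⟩
      have : l < b := by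
        by_contra hlb
        push_neg at hlb
        have := sig_mono m' hlb
        omega
      omega
    have hcard := Finset.card_le_card hsub
    rw [Nat.card_Icc] at hcard
    unfold blk
    omega

theorem blk_le_r {r : ℕ} {m' : ℕ → ℕ} (u : Fin (sig m' r)) : blk r m' (u : ℕ) ≤ r :=
  (blk_le_iff u r).mpr u.isLt

theorem card_filter_lt {n c : ℕ} (h : c ≤ n) :
    (Finset.univ.filter (fun w : Fin n => (w : ℕ) < c)).card = c := by
  have h1 : ((Finset.univ : Finset (Fin n)).map Fin.valEmbedding).filter (fun x => x < c)
      = (Finset.univ.filter (fun w : Fin n => (w : ℕ) < c)).map Fin.valEmbedding := by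
    rw [Finset.filter_map]
    rfl
  have h2 := congrArg Finset.card h1
  rw [Finset.card_map] at h2
  rw [← h2, Fin.map_valEmbedding_univ]
  have : (Finset.Iio n).filter (fun x => x < c) = Finset.Iio c := by
    ext x
    simp only [Finset.mem_filter, Finset.mem_Iio]
    omega
  rw [this, Nat.card_Iio]

theorem card_blk_fiber {r : ℕ} {m' : ℕ → ℕ} {l : ℕ} (hl1 : 1 ≤ l) (hlr : l ≤ r) :
    (Finset.univ.filter (fun w : Fin (sig m' r) => blk r m' (w : ℕ) = l)).card = m' l := by
  have hset : (Finset.univ.filter (fun w : Fin (sig m' r) => blk r m' (w : ℕ) = l))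
      = (Finset.univ.filter (fun w : Fin (sig m' r) => (w : ℕ) < sig m' l)) \
        (Finset.univ.filter (fun w : Fin (sig m' r) => (w : ℕ) < sig m' (l - 1))) := by
    ext w
    simp only [Finset.mem_filter, Finset.mem_sdiff, Finset.mem_univ, true_and]
    rw [← blk_le_iff, ← blk_le_iff]
    have := blk_pos r m' (w : ℕ)
    omega
  have hsub : (Finset.univ.filter (fun w : Fin (sig m' r) => (w : ℕ) < sig m' (l - 1)))
      ⊆ (Finset.univ.filter (fun w : Fin (sig m' r) => (w : ℕ) < sig m' l)) := by
    intro w hw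
    simp only [Finset.mem_filter, Finset.mem_univ, true_and] at *
    have := sig_mono m' (Nat.sub_le l 1)
    omega
  rw [hset, Finset.card_sdiff_of_subset hsub, card_filter_lt (sig_mono m' hlr),
    card_filter_lt (sig_mono m' (le_trans (Nat.sub_le l 1) hlr))]
  have := sig_succ m' (l - 1)
  have hll : l - 1 + 1 = l := by omega
  rw [hll] at this
  omega

theorem sum_blk_fun {r : ℕ} {m' : ℕ → ℕ} (f : ℕ → ℂ) :
    ∑ w : Fin (sig m' r), f (blk r m' (w : ℕ)) = ∑ l ∈ Finset.Icc 1 r, (m' l : ℂ) * f l := by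
  have h1 : ∀ w : Fin (sig m' r), f (blk r m' (w : ℕ))
      = ∑ l ∈ Finset.Icc 1 r, (if blk r m' (w : ℕ) = l then f l else 0) := by
    intro w
    rw [Finset.sum_ite_eq (Finset.Icc 1 r) (blk r m' (w : ℕ)) f]
    simp only [Finset.mem_Icc]
    rw [if_pos ⟨blk_pos r m' _, blk_le_r w⟩]
  simp_rw [h1]
  rw [Finset.sum_comm]
  refine Finset.sum_congr rfl fun l hl => ?_
  simp only [Finset.mem_Icc] at hl
  rw [← Finset.sum_filter, Finset.sum_const, card_blk_fiber hl.1 hl.2, nsmul_eq_mul]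

section chidelt
/-- indicator of `blk u ≤ b`. -/
def chi (r : ℕ) (m' : ℕ → ℕ) (b : ℕ) : Fin (sig m' r) → ℂ :=
  fun u => if blk r m' (u : ℕ) ≤ b then 1 else 0

/-- indicator of `blk u = b`. -/
def delt (r : ℕ) (m' : ℕ → ℕ) (b : ℕ) : Fin (sig m' r) → ℂ :=
  fun u => if blk r m' (u : ℕ) = b then 1 else 0

variable {r : ℕ} {m' : ℕ → ℕ}

theorem chi_zero (u : Fin (sig m' r)) : chi r m' 0 u = 0 := by
  have := blk_pos r m' (u : ℕ)
  simp only [chi]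
  rw [if_neg (by omega)]

theorem chi_mul_chi (a b : ℕ) (u : Fin (sig m' r)) :
    chi r m' a u * chi r m' b u = chi r m' (min a b) u := by
  simp only [chi]
  by_cases h1 : blk r m' (u : ℕ) ≤ a <;> by_cases h2 : blk r m' (u : ℕ) ≤ b <;>
    simp [h1, h2, le_min_iff]

theorem delt_mul_chi {b a : ℕ} (h : b ≤ a) (u : Fin (sig m' r)) :
    delt r m' b u * chi r m' a u = delt r m' b u := by
  simp only [delt, chi]
  by_cases h1 : blk r m' (u : ℕ) = b <;> by_cases h2 : blk r m' (u : ℕ) ≤ a <;>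
    simp [h1, h2] <;> omega

theorem delt_mul_chi_zero {b a : ℕ} (h : a < b) (u : Fin (sig m' r)) :
    delt r m' b u * chi r m' a u = 0 := by
  simp only [delt, chi]
  by_cases h1 : blk r m' (u : ℕ) = b <;> by_cases h2 : blk r m' (u : ℕ) ≤ a <;>
    simp [h1, h2] <;> omega

theorem delt_mul_delt {b c : ℕ} (h : b ≠ c) (u : Fin (sig m' r)) :
    delt r m' b u * delt r m' c u = 0 := by
  simp only [delt]
  by_cases h1 : blk r m' (u : ℕ) = b <;> by_cases h2 : blk r m' (u : ℕ) = c <;>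
    simp [h1, h2] <;> omega

theorem chi_split {b : ℕ} (hb : 1 ≤ b) (u : Fin (sig m' r)) :
    chi r m' b u = chi r m' (b - 1) u + delt r m' b u := by
  simp only [chi, delt]
  by_cases h1 : blk r m' (u : ℕ) ≤ b - 1 <;> by_cases h2 : blk r m' (u : ℕ) = b <;>
    [skip; skip; skip; skip] <;>
    first
      | (rw [if_pos (by omega), if_pos h1, if_neg h2]; ring)
      | (rw [if_pos (by omega), if_neg h1, if_pos h2]; ring)
      | (rw [if_neg (by omega), if_neg h1, if_neg h2]; ring)
      | (exfalso; omega)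

/-- the key vanishing combination. -/
theorem combo_key (h1 : m' 1 = 1) {b : ℕ} (hb : 1 ≤ b) (u : Fin (sig m' r)) :
    delt r m' b u + ((sig m' (b - 1) : ℂ))⁻¹ * (sig m' (b - 1) : ℂ) * chi r m' (b - 1) u
      - ((sig m' b : ℂ))⁻¹ * (sig m' b : ℂ) * chi r m' b u = 0 := by
  rw [inv_mul_cancel₀ (sig_ne m' h1 hb), one_mul]
  rcases Nat.eq_or_lt_of_le hb with h | h
  · rw [← h]
    simp only [Nat.sub_self, sig_zero, Nat.cast_zero, _root_.inv_zero, zero_mul, mul_zero, zero_mul]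
    have hbp := blk_pos r m' (u : ℕ)
    simp only [delt, chi]
    by_cases hc : blk r m' (u : ℕ) = 1
    · rw [if_pos hc, if_pos (by omega)]; ring
    · rw [if_neg hc, if_neg (by omega)]; ring
  · rw [inv_mul_cancel₀ (sig_ne m' h1 (by omega)), one_mul, chi_split hb]
    ring

theorem sum_chi {b : ℕ} (hb : b ≤ r) :
    ∑ u : Fin (sig m' r), chi r m' b u = (sig m' b : ℂ) := by
  simp only [chi]
  refine Eq.trans (sum_blk_fun (fun l => if l ≤ b then (1 : ℂ) else 0)) ?_
  have h2 : ∀ l ∈ Finset.Icc 1 r, (m' l : ℂ) * (if l ≤ b then (1:ℂ) else 0)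
      = if l ≤ b then (m' l : ℂ) else 0 := by
    intro l _
    split_ifs <;> ring
  rw [Finset.sum_congr rfl h2, ← Finset.sum_filter]
  have h3 : (Finset.Icc 1 r).filter (fun l => l ≤ b) = Finset.Icc 1 b := by
    ext l
    simp only [Finset.mem_filter, Finset.mem_Icc]
    omega
  rw [h3]
  unfold sig
  push_cast
  rfl

theorem sum_chi_mul_chi {a b : ℕ} (ha : a ≤ r) (hb : b ≤ r) :
    ∑ u : Fin (sig m' r), chi r m' a u * chi r m' b u = (sig m' (min a b) : ℂ) := by
  simp_rw [chi_mul_chi]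
  exact sum_chi (le_trans (min_le_left a b) ha)

/-- generic telescoping sum over `Icc (a+1) b`. -/
theorem telescope {M : Type*} [AddCommGroup M] (F : ℕ → M) {a b : ℕ} (hab : a ≤ b) :
    ∑ x ∈ Finset.Icc (a + 1) b, (F (x - 1) - F x) = F a - F b := by
  induction b, hab using Nat.le_induction with
  | base => rw [Finset.Icc_eq_empty (by omega), Finset.sum_empty, sub_self]
  | succ b hab ih =>
    rw [Finset.sum_Icc_succ_top (by omega), ih]
    simp only [Nat.add_sub_cancel]
    abel

end chidelt

/-- the eigenvalue attached to block `b`. -/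
def lamB (r : ℕ) (m' : ℕ → ℕ) (b : ℕ) : ℕ :=
  (if b % 2 = 0 then sig m' b else 0) + ∑ l ∈ Finset.Icc (b + 1) r, (if l % 2 = 0 then m' l else 0)

/-- the parity indicator. -/
def eps (b : ℕ) : ℂ := if b % 2 = 0 then 1 else 0

/-- the auxiliary function whose telescoping gives the Laplacian identity. -/
noncomputable def gfun (r : ℕ) (m' : ℕ → ℕ) (b : ℕ) : ℂ :=
  (lamB r m' b : ℂ) * ((sig m' b : ℂ))⁻¹ - eps b

variable {r : ℕ} {m' : ℕ → ℕ}

theorem lam_pull {b : ℕ} (hb : 1 ≤ b) (hbr : b ≤ r) :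
    lamB r m' (b - 1) = (if (b - 1) % 2 = 0 then sig m' (b - 1) else 0)
      + (if b % 2 = 0 then m' b else 0)
      + ∑ l ∈ Finset.Icc (b + 1) r, (if l % 2 = 0 then m' l else 0) := by
  unfold lamB
  have h1 : b - 1 + 1 = b := by omega
  rw [h1]
  have h2 : Finset.Icc b r = insert b (Finset.Icc (b + 1) r) := by
    ext l
    simp only [Finset.mem_Icc, Finset.mem_insert]
    omega
  rw [h2, Finset.sum_insert (by simp)]
  ring

theorem lam_step_even {b : ℕ} (hb : 1 ≤ b) (hbr : b ≤ r) (he : b % 2 = 0) :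
    lamB r m' b = lamB r m' (b - 1) + sig m' (b - 1) := by
  rw [lam_pull hb hbr]
  unfold lamB
  rw [if_pos he, if_pos he, if_neg (by omega)]
  have h3 : sig m' b = sig m' (b - 1) + m' b := by
    have := sig_succ m' (b - 1)
    have h1 : b - 1 + 1 = b := by omega
    rw [h1] at this
    exact this
  omega

theorem lam_step_odd {b : ℕ} (hb : 1 ≤ b) (hbr : b ≤ r) (he : b % 2 = 1) :
    lamB r m' (b - 1) = lamB r m' b + sig m' (b - 1) := by
  rw [lam_pull hb hbr]
  unfold lamB
  rw [if_pos (show (b - 1) % 2 = 0 by omega), if_neg (show ¬ b % 2 = 0 by omega),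
    if_neg (show ¬ b % 2 = 0 by omega)]
  omega

theorem g_step (h1 : m' 1 = 1) {b : ℕ} (hb : 2 ≤ b) (hbr : b ≤ r) :
    (lamB r m' b : ℂ) * (((sig m' (b - 1) : ℂ))⁻¹ - ((sig m' b : ℂ))⁻¹)
      = gfun r m' (b - 1) - gfun r m' b := by
  have hne1 : ((sig m' (b - 1) : ℂ)) ≠ 0 := sig_ne m' h1 (by omega)
  have hne2 : ((sig m' b : ℂ)) ≠ 0 := sig_ne m' h1 (by omega)
  unfold gfun eps
  rcases Nat.even_or_odd b with he | ho
  · have he' : b % 2 = 0 := Nat.even_iff.mp he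
    have hstep := lam_step_even (r := r) (m' := m') (by omega) hbr he'
    rw [if_pos he', if_neg (by omega)]
    have hcast : (lamB r m' b : ℂ) = (lamB r m' (b - 1) : ℂ) + (sig m' (b - 1) : ℂ) := by
      exact_mod_cast hstep
    rw [hcast]
    field_simp
    ring
  · have ho' : b % 2 = 1 := Nat.odd_iff.mp ho
    have hstep := lam_step_odd (r := r) (m' := m') (by omega) hbr ho'
    rw [if_pos (show (b - 1) % 2 = 0 by omega), if_neg (show ¬ b % 2 = 0 by omega)]
    have hcast : (lamB r m' (b - 1) : ℂ) = (lamB r m' b : ℂ) + (sig m' (b - 1) : ℂ) := by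
      exact_mod_cast hstep
    rw [hcast]
    field_simp
    ring

theorem g_top (h1 : m' 1 = 1) (hr1 : 1 ≤ r) (hre : r % 2 = 0) : gfun r m' r = 0 := by
  unfold gfun eps lamB
  rw [Finset.Icc_eq_empty (by omega), Finset.sum_empty, if_pos hre, if_pos hre]
  rw [Nat.add_zero]
  rw [mul_inv_cancel₀ (sig_ne m' h1 hr1)]
  ring

/-- the spectral projector attached to block `b`. -/
noncomputable def PP (r : ℕ) (m' : ℕ → ℕ) (b : ℕ) :
    Matrix (Fin (sig m' r)) (Fin (sig m' r)) ℂ :=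
  Matrix.diagonal (delt r m' b)
    + ((sig m' (b - 1) : ℂ))⁻¹ • Matrix.vecMulVec (chi r m' (b - 1)) (chi r m' (b - 1))
    - ((sig m' b : ℂ))⁻¹ • Matrix.vecMulVec (chi r m' b) (chi r m' b)

section helpers
variable {n : ℕ}

theorem vmv_mul_vmv (a b c d : Fin n → ℂ) :
    Matrix.vecMulVec a b * Matrix.vecMulVec c d = (∑ u, b u * c u) • Matrix.vecMulVec a d := by
  ext i j
  simp only [Matrix.mul_apply, Matrix.vecMulVec_apply, Matrix.smul_apply, smul_eq_mul,
    Finset.sum_mul]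
  exact Finset.sum_congr rfl fun u _ => by ring

theorem diag_mul_vmv (f a b : Fin n → ℂ) :
    Matrix.diagonal f * Matrix.vecMulVec a b = Matrix.vecMulVec (fun u => f u * a u) b := by
  ext i j
  rw [Matrix.diagonal_mul]
  simp only [Matrix.vecMulVec_apply]
  ring

theorem vmv_mul_diag (a b f : Fin n → ℂ) :
    Matrix.vecMulVec a b * Matrix.diagonal f = Matrix.vecMulVec a (fun u => b u * f u) := by
  ext i j
  rw [Matrix.mul_diagonal]
  simp only [Matrix.vecMulVec_apply]
  ring

theorem vmv_zero_left (b : Fin n → ℂ) (a : Fin n → ℂ) (ha : ∀ u, a u = 0) :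
    Matrix.vecMulVec a b = 0 := by
  ext i j
  simp [Matrix.vecMulVec_apply, ha i]

theorem vmv_zero_right (a : Fin n → ℂ) (b : Fin n → ℂ) (hb : ∀ u, b u = 0) :
    Matrix.vecMulVec a b = 0 := by
  ext i j
  simp [Matrix.vecMulVec_apply, hb j]

end helpers

variable {r : ℕ} {m' : ℕ → ℕ}

theorem mul_PP_right (h1 : m' 1 = 1) {c a : ℕ} (hc1 : 1 ≤ c) (hcr : c ≤ r) (hca : c ≤ a)
    (har : a ≤ r) (v : Fin (sig m' r) → ℂ) :
    Matrix.vecMulVec v (chi r m' a) * PP r m' c = 0 := by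
  unfold PP
  rw [mul_sub, mul_add, vmv_mul_diag, mul_smul_comm, vmv_mul_vmv, mul_smul_comm, vmv_mul_vmv,
    sum_chi_mul_chi har (le_trans (Nat.sub_le c 1) hcr), sum_chi_mul_chi har hcr,
    min_eq_right (by omega : c - 1 ≤ a), min_eq_right hca, smul_smul, smul_smul]
  ext i j
  simp only [Matrix.sub_apply, Matrix.add_apply, Matrix.smul_apply, Matrix.vecMulVec_apply,
    smul_eq_mul, Matrix.zero_apply]
  have hkey := combo_key h1 hc1 j
  have h2 : chi r m' a j * delt r m' c j = delt r m' c j := by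
    rw [mul_comm]; exact delt_mul_chi hca j
  linear_combination v i * hkey + v i * h2

theorem PP_mul_left (h1 : m' 1 = 1) {b a : ℕ} (hb1 : 1 ≤ b) (hbr : b ≤ r) (hba : b ≤ a)
    (har : a ≤ r) (w : Fin (sig m' r) → ℂ) :
    PP r m' b * Matrix.vecMulVec (chi r m' a) w = 0 := by
  unfold PP
  rw [sub_mul, add_mul, diag_mul_vmv, smul_mul_assoc, vmv_mul_vmv, smul_mul_assoc, vmv_mul_vmv,
    sum_chi_mul_chi (le_trans (Nat.sub_le b 1) hbr) har, sum_chi_mul_chi hbr har,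
    min_eq_left (by omega : b - 1 ≤ a), min_eq_left hba, smul_smul, smul_smul]
  ext i j
  simp only [Matrix.sub_apply, Matrix.add_apply, Matrix.smul_apply, Matrix.vecMulVec_apply,
    smul_eq_mul, Matrix.zero_apply]
  have hkey := combo_key h1 hb1 i
  have h2 : delt r m' b i * chi r m' a i = delt r m' b i := delt_mul_chi hba i
  linear_combination w j * hkey + w j * h2

theorem diagdelt_mul_PP {b c : ℕ} (hcb : c < b) :
    Matrix.diagonal (delt r m' b) * PP r m' c = 0 := by
  unfold PP
  rw [mul_sub, mul_add, Matrix.diagonal_mul_diagonal, mul_smul_comm, diag_mul_vmv,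
    mul_smul_comm, diag_mul_vmv]
  rw [vmv_zero_left _ _ (fun u => delt_mul_chi_zero (by omega) u),
    vmv_zero_left _ _ (fun u => delt_mul_chi_zero (by omega : c < b) u)]
  have hdd : ∀ u, delt r m' b u * delt r m' c u = 0 := fun u => delt_mul_delt (by omega) u
  ext i j
  by_cases hij : i = j <;>
    simp [hij, Matrix.diagonal_apply_eq, Matrix.diagonal_apply_ne, hdd]

theorem PP_mul_diagdelt {b c : ℕ} (hbc : b < c) :
    PP r m' b * Matrix.diagonal (delt r m' c) = 0 := by
  unfold PP
  rw [sub_mul, add_mul, Matrix.diagonal_mul_diagonal, smul_mul_assoc, vmv_mul_diag,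
    smul_mul_assoc, vmv_mul_diag]
  rw [vmv_zero_right _ _ (fun u => by
      rw [mul_comm]; exact delt_mul_chi_zero (by omega : b - 1 < c) u),
    vmv_zero_right _ _ (fun u => by rw [mul_comm]; exact delt_mul_chi_zero hbc u)]
  have hdd : ∀ u, delt r m' b u * delt r m' c u = 0 := fun u => delt_mul_delt (by omega) u
  ext i j
  by_cases hij : i = j <;>
    simp [hij, Matrix.diagonal_apply_eq, Matrix.diagonal_apply_ne, hdd]

theorem PP_orth (h1 : m' 1 = 1) {b c : ℕ} (hb1 : 1 ≤ b) (hbr : b ≤ r) (hc1 : 1 ≤ c)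
    (hcr : c ≤ r) (hbc : b ≠ c) : PP r m' b * PP r m' c = 0 := by
  rcases Nat.lt_or_ge b c with h | h
  · conv_lhs => rw [show PP r m' c = Matrix.diagonal (delt r m' c)
      + ((sig m' (c - 1) : ℂ))⁻¹ • Matrix.vecMulVec (chi r m' (c - 1)) (chi r m' (c - 1))
      - ((sig m' c : ℂ))⁻¹ • Matrix.vecMulVec (chi r m' c) (chi r m' c) from rfl]
    rw [mul_sub, mul_add, PP_mul_diagdelt h, mul_smul_comm, mul_smul_comm,
      PP_mul_left h1 hb1 hbr (by omega : b ≤ c - 1) (le_trans (Nat.sub_le c 1) hcr),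
      PP_mul_left h1 hb1 hbr (le_of_lt h) hcr]
    simp
  · have h' : c < b := by omega
    conv_lhs => rw [show PP r m' b = Matrix.diagonal (delt r m' b)
      + ((sig m' (b - 1) : ℂ))⁻¹ • Matrix.vecMulVec (chi r m' (b - 1)) (chi r m' (b - 1))
      - ((sig m' b : ℂ))⁻¹ • Matrix.vecMulVec (chi r m' b) (chi r m' b) from rfl]
    rw [sub_mul, add_mul, diagdelt_mul_PP h', smul_mul_assoc, smul_mul_assoc,
      mul_PP_right h1 hc1 hcr (by omega : c ≤ b - 1) (le_trans (Nat.sub_le b 1) hbr),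
      mul_PP_right h1 hc1 hcr (le_of_lt h') hbr]
    simp


theorem sum_diagdelt {r : ℕ} {m' : ℕ → ℕ} :
    ∑ b ∈ Finset.Icc 1 r, Matrix.diagonal (delt r m' b)
      = (1 : Matrix (Fin (sig m' r)) (Fin (sig m' r)) ℂ) := by
  ext i j
  rw [Matrix.sum_apply]
  by_cases hij : i = j
  · subst hij
    simp only [Matrix.diagonal_apply_eq, Matrix.one_apply_eq]
    have : ∀ b ∈ Finset.Icc 1 r, delt r m' b i = if blk r m' (i : ℕ) = b then 1 else 0 :=
      fun b _ => rfl
    rw [Finset.sum_congr rfl this, Finset.sum_ite_eq]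
    rw [if_pos (by simp only [Finset.mem_Icc]; exact ⟨blk_pos r m' _, blk_le_r i⟩)]
  · simp [Matrix.diagonal_apply_ne _ hij, Matrix.one_apply_ne hij]

theorem PP_sum {r : ℕ} {m' : ℕ → ℕ} :
    ∑ b ∈ Finset.Icc 1 r, PP r m' b
      = 1 - ((sig m' r : ℂ))⁻¹ • Matrix.vecMulVec (chi r m' r) (chi r m' r) := by
  set F : ℕ → Matrix (Fin (sig m' r)) (Fin (sig m' r)) ℂ :=
    fun b => ((sig m' b : ℂ))⁻¹ • Matrix.vecMulVec (chi r m' b) (chi r m' b) with hF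
  have hPP : ∀ b, PP r m' b = Matrix.diagonal (delt r m' b) + (F (b - 1) - F b) := by
    intro b
    unfold PP
    rw [hF, add_sub_assoc]
  have htel : ∑ b ∈ Finset.Icc 1 r, (F (b - 1) - F b) = F 0 - F r := by
    have := telescope F (Nat.zero_le r)
    simpa using this
  have hF0 : F 0 = 0 := by
    rw [hF]
    simp only [sig_zero, Nat.cast_zero]
    rw [_root_.inv_zero, zero_smul]
  simp_rw [hPP]
  rw [Finset.sum_add_distrib, sum_diagdelt, htel, hF0]
  abel

theorem PP_idem (h1 : m' 1 = 1) {b : ℕ} (hb1 : 1 ≤ b) (hbr : b ≤ r) :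
    PP r m' b * PP r m' b = PP r m' b := by
  have h2 : PP r m' b * (∑ c ∈ Finset.Icc 1 r, PP r m' c) = PP r m' b := by
    rw [PP_sum, mul_sub, mul_one, mul_smul_comm,
      PP_mul_left h1 hb1 hbr hbr le_rfl, smul_zero, sub_zero]
  rw [Finset.mul_sum] at h2
  refine Eq.trans ?_ h2
  exact (Finset.sum_eq_single_of_mem b (Finset.mem_Icc.mpr ⟨hb1, hbr⟩)
    (fun c hc hcb => by
      have hc' := Finset.mem_Icc.mp hc
      exact PP_orth h1 hb1 hbr hc'.1 hc'.2 (fun h => hcb (h.symm)))).symm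

theorem chi_pair (a : ℕ) (u v : Fin (sig m' r)) :
    chi r m' a u * chi r m' a v
      = if max (blk r m' (u : ℕ)) (blk r m' (v : ℕ)) ≤ a then 1 else 0 := by
  simp only [chi]
  by_cases h1 : blk r m' (u : ℕ) ≤ a <;> by_cases h2 : blk r m' (v : ℕ) ≤ a <;>
    simp [h1, h2, max_le_iff]

theorem PP_apply_ne {u v : Fin (sig m' r)} (huv : u ≠ v) (b : ℕ) :
    PP r m' b u v
      = (((sig m' (b - 1) : ℂ))⁻¹) * (if max (blk r m' (u : ℕ)) (blk r m' (v : ℕ)) ≤ b - 1 then 1 else 0)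
        - (((sig m' b : ℂ))⁻¹) * (if max (blk r m' (u : ℕ)) (blk r m' (v : ℕ)) ≤ b then 1 else 0) := by
  unfold PP
  simp only [Matrix.sub_apply, Matrix.add_apply, Matrix.smul_apply, Matrix.vecMulVec_apply,
    Matrix.diagonal_apply_ne _ huv, smul_eq_mul]
  rw [← chi_pair, ← chi_pair]
  ring

/-- the off-diagonal part of the spectral sum. -/
theorem offdiag_sum (h1 : m' 1 = 1) (hr1 : 1 ≤ r) (hre : r % 2 = 0) {B : ℕ} (hB1 : 1 ≤ B)
    (hBr : B ≤ r) :
    ∑ b ∈ Finset.Icc 1 r, (lamB r m' b : ℂ)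
        * (((sig m' (b - 1) : ℂ))⁻¹ * (if B ≤ b - 1 then 1 else 0)
          - ((sig m' b : ℂ))⁻¹ * (if B ≤ b then 1 else 0))
      = -(eps B) := by
  have hsplit : Finset.Icc 1 r = Finset.Ioc 0 r := by rw [← Finset.Icc_add_one_left_eq_Ioc, zero_add]
  rw [hsplit, ← Finset.sum_Ioc_consecutive _ (Nat.zero_le B) hBr]
  have hfirst : ∑ b ∈ Finset.Ioc 0 B, (lamB r m' b : ℂ)
      * (((sig m' (b - 1) : ℂ))⁻¹ * (if B ≤ b - 1 then 1 else 0)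
        - ((sig m' b : ℂ))⁻¹ * (if B ≤ b then 1 else 0))
      = -((lamB r m' B : ℂ) * ((sig m' B : ℂ))⁻¹) := by
    rw [Finset.sum_eq_single_of_mem B (Finset.mem_Ioc.mpr ⟨by omega, le_rfl⟩)]
    · rw [if_neg (by omega), if_pos le_rfl]
      ring
    · intro b hb hbB
      have hb' := Finset.mem_Ioc.mp hb
      rw [if_neg (by omega), if_neg (by omega)]
      ring
  have hsecond : ∑ b ∈ Finset.Ioc B r, (lamB r m' b : ℂ)
      * (((sig m' (b - 1) : ℂ))⁻¹ * (if B ≤ b - 1 then 1 else 0)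
        - ((sig m' b : ℂ))⁻¹ * (if B ≤ b then 1 else 0))
      = gfun r m' B := by
    rw [← Finset.Icc_add_one_left_eq_Ioc]
    have hcongr : ∀ b ∈ Finset.Icc (B + 1) r, (lamB r m' b : ℂ)
        * (((sig m' (b - 1) : ℂ))⁻¹ * (if B ≤ b - 1 then 1 else 0)
          - ((sig m' b : ℂ))⁻¹ * (if B ≤ b then 1 else 0))
        = gfun r m' (b - 1) - gfun r m' b := by
      intro b hb
      have hb' := Finset.mem_Icc.mp hb
      rw [if_pos (by omega), if_pos (by omega), mul_one, mul_one]
      exact g_step h1 (by omega) hb'.2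
    rw [Finset.sum_congr rfl hcongr, telescope (gfun r m') hBr, g_top h1 hr1 hre, sub_zero]
  rw [hfirst, hsecond]
  unfold gfun
  ring

theorem sum_lam (h1 : m' 1 = 1) {B : ℕ} (hB1 : 1 ≤ B) (hBr : B ≤ r) :
    ∑ l ∈ Finset.Icc 1 r, (m' l : ℂ) * (if max B l % 2 = 0 then 1 else 0)
      = (lamB r m' B : ℂ) := by
  have hsplit : Finset.Icc 1 r = Finset.Ioc 0 r := by rw [← Finset.Icc_add_one_left_eq_Ioc, zero_add]
  rw [hsplit, ← Finset.sum_Ioc_consecutive _ (Nat.zero_le B) hBr]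
  have hfirst : ∑ l ∈ Finset.Ioc 0 B, (m' l : ℂ) * (if max B l % 2 = 0 then 1 else 0)
      = (if B % 2 = 0 then (sig m' B : ℂ) else 0) := by
    have hc : ∀ l ∈ Finset.Ioc 0 B, (m' l : ℂ) * (if max B l % 2 = 0 then 1 else 0)
        = (if B % 2 = 0 then (m' l : ℂ) else 0) := by
      intro l hl
      have hl' := Finset.mem_Ioc.mp hl
      rw [max_eq_left hl'.2]
      split_ifs <;> ring
    rw [Finset.sum_congr rfl hc]
    split_ifs with h
    · rw [← Finset.Icc_add_one_left_eq_Ioc]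
      unfold sig
      push_cast
      rfl
    · exact Finset.sum_const_zero
  have hsecond : ∑ l ∈ Finset.Ioc B r, (m' l : ℂ) * (if max B l % 2 = 0 then 1 else 0)
      = ((∑ l ∈ Finset.Icc (B + 1) r, if l % 2 = 0 then m' l else 0 : ℕ) : ℂ) := by
    rw [← Finset.Icc_add_one_left_eq_Ioc]
    push_cast
    refine Finset.sum_congr rfl fun l hl => ?_
    have hl' := Finset.mem_Icc.mp hl
    rw [max_eq_right (by omega)]
    split_ifs <;> simp
  rw [hfirst, hsecond]
  unfold lamB
  push_cast
  split_ifs <;> simp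

theorem deg_eq (h1 : m' 1 = 1) (u : Fin (sig m' r)) :
    (((GammaEven r m').degree u : ℂ))
      = (lamB r m' (blk r m' (u : ℕ)) : ℂ) - eps (blk r m' (u : ℕ)) := by
  rw [SimpleGraph.degree_eq_sum_if_adj]
  have hsplit : ∀ w : Fin (sig m' r), (if (GammaEven r m').Adj u w then (1 : ℂ) else 0)
      = (if max (blk r m' (u : ℕ)) (blk r m' (w : ℕ)) % 2 = 0 then 1 else 0)
        - (if w = u then (if blk r m' (u : ℕ) % 2 = 0 then (1:ℂ) else 0) else 0) := by
    intro w
    by_cases hw : w = u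
    · subst hw
      rw [if_pos rfl, if_neg (fun h => h.1 rfl), max_self]
      ring
    · rw [if_neg hw]
      have : (GammaEven r m').Adj u w ↔ (max (blk r m' (u : ℕ)) (blk r m' (w : ℕ)) % 2 = 0) := by
        constructor
        · exact fun h => h.2
        · exact fun h => ⟨fun he => hw he.symm, h⟩
      rw [sub_zero]
      split_ifs with hA hB hB
      · rfl
      · exact absurd (this.mp hA) hB
      · exact absurd (this.mpr hB) hA
      · rfl
  rw [Finset.sum_congr rfl (fun w _ => hsplit w), Finset.sum_sub_distrib]
  rw [Finset.sum_ite_eq' Finset.univ u (fun _ => if blk r m' (u : ℕ) % 2 = 0 then (1:ℂ) else 0),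
    if_pos (Finset.mem_univ u)]
  have hmain := sum_blk_fun (r := r) (m' := m')
    (fun l => if max (blk r m' (u : ℕ)) l % 2 = 0 then (1:ℂ) else 0)
  rw [hmain, sum_lam h1 (blk_pos r m' (u : ℕ)) (blk_le_r u)]
  rfl

theorem lap_eq (h1 : m' 1 = 1) (hr1 : 1 ≤ r) (hre : r % 2 = 0) :
    (GammaEven r m').lapMatrix ℂ = ∑ b ∈ Finset.Icc 1 r, (lamB r m' b : ℂ) • PP r m' b := by
  ext u v
  rw [Matrix.sum_apply]
  simp only [Matrix.smul_apply, smul_eq_mul]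
  rw [SimpleGraph.lapMatrix, Matrix.sub_apply, SimpleGraph.degMatrix,
    SimpleGraph.adjMatrix_apply]
  by_cases huv : u = v
  · subst huv
    rw [Matrix.diagonal_apply_eq, if_neg (SimpleGraph.irrefl _), sub_zero]
    have hPPuu : ∀ b, PP r m' b u u = delt r m' b u
        + (((sig m' (b - 1) : ℂ))⁻¹ * (if max (blk r m' (u : ℕ)) (blk r m' (u : ℕ)) ≤ b - 1 then 1 else 0)
          - ((sig m' b : ℂ))⁻¹ * (if max (blk r m' (u : ℕ)) (blk r m' (u : ℕ)) ≤ b then 1 else 0)) := by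
      intro b
      unfold PP
      simp only [Matrix.sub_apply, Matrix.add_apply, Matrix.smul_apply, Matrix.vecMulVec_apply,
        Matrix.diagonal_apply_eq, smul_eq_mul]
      rw [← chi_pair, ← chi_pair]
      ring
    have hexpand : ∀ b ∈ Finset.Icc 1 r, (lamB r m' b : ℂ) * PP r m' b u u
        = (if blk r m' (u : ℕ) = b then (lamB r m' b : ℂ) else 0)
          + (lamB r m' b : ℂ)
            * (((sig m' (b - 1) : ℂ))⁻¹ * (if max (blk r m' (u : ℕ)) (blk r m' (u : ℕ)) ≤ b - 1 then 1 else 0)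
              - ((sig m' b : ℂ))⁻¹ * (if max (blk r m' (u : ℕ)) (blk r m' (u : ℕ)) ≤ b then 1 else 0)) := by
      intro b _
      rw [hPPuu b]
      unfold delt
      split_ifs <;> ring
    rw [Finset.sum_congr rfl hexpand, Finset.sum_add_distrib]
    rw [max_self] at *
    rw [offdiag_sum h1 hr1 hre (blk_pos r m' (u : ℕ)) (blk_le_r u)]
    rw [Finset.sum_ite_eq (Finset.Icc 1 r) (blk r m' (u : ℕ)) (fun b => (lamB r m' b : ℂ)),
      if_pos (Finset.mem_Icc.mpr ⟨blk_pos r m' _, blk_le_r u⟩)]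
    rw [deg_eq h1 u]
    ring
  · rw [Matrix.diagonal_apply_ne _ huv, zero_sub]
    have hadj : (if (GammaEven r m').Adj u v then (1 : ℂ) else 0)
        = if max (blk r m' (u : ℕ)) (blk r m' (v : ℕ)) % 2 = 0 then 1 else 0 := by
      have hiff : (GammaEven r m').Adj u v
          ↔ max (blk r m' (u : ℕ)) (blk r m' (v : ℕ)) % 2 = 0 :=
        ⟨fun h => h.2, fun h => ⟨huv, h⟩⟩
      split_ifs with hA hB hB
      · rfl
      · exact absurd (hiff.mp hA) hB
      · exact absurd (hiff.mpr hB) hA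
      · rfl
    rw [hadj]
    have hB1 : 1 ≤ max (blk r m' (u : ℕ)) (blk r m' (v : ℕ)) :=
      le_trans (blk_pos r m' (u : ℕ)) (le_max_left _ _)
    have hBr : max (blk r m' (u : ℕ)) (blk r m' (v : ℕ)) ≤ r :=
      max_le (blk_le_r u) (blk_le_r v)
    have := offdiag_sum (m' := m') h1 hr1 hre hB1 hBr
    rw [Finset.sum_congr rfl (fun b _ => by rw [PP_apply_ne huv b]), this]
    unfold eps
    ring

theorem pow_smul_idem {N : ℕ} (P : Matrix (Fin N) (Fin N) ℂ) (hP : P * P = P) (μ : ℂ) :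
    ∀ n : ℕ, (μ • P) ^ (n + 1) = (μ ^ (n + 1)) • P := by
  intro n
  induction n with
  | zero => simp
  | succ n ih =>
    rw [pow_succ, ih, smul_mul_assoc, mul_smul_comm, hP, smul_smul, ← pow_succ]

theorem exp_smul_idem {N : ℕ} (P : Matrix (Fin N) (Fin N) ℂ) (hP : P * P = P) (μ : ℂ) :
    NormedSpace.exp (μ • P) = 1 + (Complex.exp μ - 1) • P := by
  letI : SeminormedRing (Matrix (Fin N) (Fin N) ℂ) := Matrix.linftyOpSemiNormedRing
  letI : NormedRing (Matrix (Fin N) (Fin N) ℂ) := Matrix.linftyOpNormedRing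
  letI : NormedAlgebra ℂ (Matrix (Fin N) (Fin N) ℂ) := Matrix.linftyOpNormedAlgebra
  have hbase : Summable (fun n : ℕ => ((n.factorial : ℂ))⁻¹ * μ ^ n) := by
    have := NormedSpace.expSeries_summable' (𝕂 := ℂ) μ
    simpa [smul_eq_mul] using this
  have hshift : Summable (fun n : ℕ => (((n + 1).factorial : ℂ))⁻¹ * μ ^ (n + 1)) := by
    have := hbase.comp_injective (add_left_injective 1)
    exact this
  have hexp : Complex.exp μ = ∑' n : ℕ, ((n.factorial : ℂ))⁻¹ * μ ^ n := by
    rw [Complex.exp_eq_exp_ℂ, NormedSpace.exp_eq_tsum ℂ]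
    exact tsum_congr fun n => by rw [smul_eq_mul]
  have htail : ∑' n : ℕ, (((n + 1).factorial : ℂ))⁻¹ * μ ^ (n + 1) = Complex.exp μ - 1 := by
    rw [hexp, hbase.tsum_eq_zero_add]
    simp
  rw [NormedSpace.exp_eq_tsum ℂ]
  show (∑' n : ℕ, ((n.factorial : ℂ))⁻¹ • (μ • P) ^ n) = _
  rw [Summable.tsum_eq_zero_add (by exact NormedSpace.expSeries_summable' (𝕂 := ℂ) (μ • P))]
  simp only [pow_zero, Nat.factorial_zero, Nat.cast_one, inv_one, one_smul]
  congr 1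
  have h2 : ∀ n : ℕ, (((n + 1).factorial : ℂ))⁻¹ • (μ • P) ^ (n + 1)
      = ((((n + 1).factorial : ℂ))⁻¹ * μ ^ (n + 1)) • P := by
    intro n
    rw [pow_smul_idem P hP, smul_smul]
  rw [tsum_congr h2, hshift.tsum_smul_const, htail]

theorem exp_orth_sum {N : ℕ} (P : ℕ → Matrix (Fin N) (Fin N) ℂ) (μ : ℕ → ℂ)
    (s : Finset ℕ) (hidem : ∀ b ∈ s, P b * P b = P b)
    (horth : ∀ b ∈ s, ∀ c ∈ s, b ≠ c → P b * P c = 0) :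
    NormedSpace.exp (∑ b ∈ s, μ b • P b)
      = 1 + ∑ b ∈ s, (Complex.exp (μ b) - 1) • P b := by
  induction s using Finset.induction_on with
  | empty => simp
  | @insert a s ha ih =>
    rw [Finset.sum_insert ha, Finset.sum_insert ha]
    have hcomm : Commute (μ a • P a) (∑ b ∈ s, μ b • P b) := by
      apply Commute.sum_right
      intro b hb
      have hab : a ≠ b := fun h => ha (h ▸ hb)
      show _ = _
      rw [smul_mul_assoc, mul_smul_comm, smul_mul_assoc, mul_smul_comm,
        horth a (Finset.mem_insert_self a s) b (Finset.mem_insert_of_mem hb) hab,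
        horth b (Finset.mem_insert_of_mem hb) a (Finset.mem_insert_self a s) hab.symm]
      simp
    rw [Matrix.exp_add_of_commute _ _ hcomm,
      ih (fun b hb => hidem b (Finset.mem_insert_of_mem hb))
        (fun b hb c hc hbc => horth b (Finset.mem_insert_of_mem hb) c
          (Finset.mem_insert_of_mem hc) hbc),
      exp_smul_idem (P a) (hidem a (Finset.mem_insert_self a s)) (μ a)]
    have hPS : P a * (∑ b ∈ s, (Complex.exp (μ b) - 1) • P b) = 0 := by
      rw [Finset.mul_sum]
      refine Finset.sum_eq_zero fun b hb => ?_
      rw [mul_smul_comm, horth a (Finset.mem_insert_self a s) b (Finset.mem_insert_of_mem hb)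
        (fun h => ha (h ▸ hb)), smul_zero]
    rw [add_mul, one_mul, mul_add, mul_one, smul_mul_assoc, hPS, smul_zero, add_zero]
    abel

end St17

open St17

/-- Let `m₁ = 2`, `m₂ ≡ 2 (mod 4)`, `m_l ≡ 0 (mod 4)` for
`l = 3,…,2k`, and let `Ĝ = Γ(m₁−1, m₂, …, m_{2k})` (one vertex of the first block
removed).  Then every offdiagonal entry of `Û_t = exp(−itL(Ĝ))` has modulus at most
`2/(m₂+1)`. -/
theorem ut_offdiag_bound_delete_first_block (k : ℕ) (hk : 1 ≤ k) (m : ℕ → ℕ)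
    (hm : ∀ i, 1 ≤ i → i ≤ 2 * k → 1 ≤ m i) (hm1 : m 1 = 2)
    (hm2 : m 2 % 4 = 2) (hml : ∀ l, 3 ≤ l → l ≤ 2 * k → m l % 4 = 0)
    (mh : ℕ → ℕ) (hmh : ∀ p, mh p = if p = 1 then m 1 - 1 else m p)
    (i j : Fin (sig mh (2 * k))) (hij : i ≠ j) (t : ℝ) :
    ‖Ut (GammaEven (2 * k) mh) t i j‖ ≤ 2 / ((m 2 : ℝ) + 1) := by
  have h1 : mh 1 = 1 := by rw [hmh 1, if_pos rfl, hm1]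
  have hr1 : 1 ≤ 2 * k := by omega
  have hre : (2 * k) % 2 = 0 := by omega
  set c : ℂ := -(Complex.I * (t : ℂ)) with hc
  have hexpand : c • (GammaEven (2 * k) mh).lapMatrix ℂ
      = ∑ b ∈ Finset.Icc 1 (2 * k), (c * (lamB (2 * k) mh b : ℂ)) • PP (2 * k) mh b := by
    rw [lap_eq h1 hr1 hre, Finset.smul_sum]
    exact Finset.sum_congr rfl fun b _ => smul_smul c _ _
  have hU : Ut (GammaEven (2 * k) mh) t
      = 1 + ∑ b ∈ Finset.Icc 1 (2 * k),
          (Complex.exp (c * (lamB (2 * k) mh b : ℂ)) - 1) • PP (2 * k) mh b := by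
    show NormedSpace.exp (c • (GammaEven (2 * k) mh).lapMatrix ℂ) = _
    rw [hexpand]
    exact exp_orth_sum (PP (2 * k) mh) (fun b => c * (lamB (2 * k) mh b : ℂ)) _
      (fun b hb => PP_idem h1 (Finset.mem_Icc.mp hb).1 (Finset.mem_Icc.mp hb).2)
      (fun b hb c' hc' hbc => PP_orth h1 (Finset.mem_Icc.mp hb).1 (Finset.mem_Icc.mp hb).2
        (Finset.mem_Icc.mp hc').1 (Finset.mem_Icc.mp hc').2 hbc)
  set B := max (blk (2 * k) mh (i : ℕ)) (blk (2 * k) mh (j : ℕ)) with hB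
  have hBr : B ≤ 2 * k := max_le (blk_le_r i) (blk_le_r j)
  have hB2 : 2 ≤ B := by
    by_contra hcon
    push_neg at hcon
    have hmi := le_max_left (blk (2 * k) mh (i : ℕ)) (blk (2 * k) mh (j : ℕ))
    have hmj := le_max_right (blk (2 * k) mh (i : ℕ)) (blk (2 * k) mh (j : ℕ))
    have hi1 : (i : ℕ) < sig mh 1 := (blk_le_iff i 1).mp (by omega)
    have hj1 : (j : ℕ) < sig mh 1 := (blk_le_iff j 1).mp (by omega)
    rw [sig_one, h1] at hi1 hj1
    exact hij (Fin.ext (by omega))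
  have hB1 : 1 ≤ B := by omega
  set p : ℕ → ℂ := fun b => ((sig mh (b - 1) : ℂ))⁻¹ * (if B ≤ b - 1 then 1 else 0)
      - ((sig mh b : ℂ))⁻¹ * (if B ≤ b then 1 else 0) with hp
  have hPPij : ∀ b, PP (2 * k) mh b i j = p b := by
    intro b
    rw [PP_apply_ne hij b, ← hB]
  have hps : ∑ b ∈ Finset.Icc 1 (2 * k), p b = -((sig mh (2 * k) : ℂ))⁻¹ := by
    have h3 := congrArg (fun M : Matrix (Fin (sig mh (2 * k))) (Fin (sig mh (2 * k))) ℂ => M i j)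
      (PP_sum (r := 2 * k) (m' := mh))
    simp only [Matrix.sum_apply, Matrix.sub_apply, Matrix.smul_apply,
      Matrix.one_apply_ne hij, Matrix.vecMulVec_apply, smul_eq_mul] at h3
    rw [Finset.sum_congr rfl (fun b _ => hPPij b)] at h3
    have hchir : ∀ u : Fin (sig mh (2 * k)), chi (2 * k) mh (2 * k) u = 1 := by
      intro u
      unfold chi
      rw [if_pos (blk_le_r u)]
    rw [hchir i, hchir j] at h3
    rw [h3]
    simp
  have hentry : Ut (GammaEven (2 * k) mh) t i j
      = ∑ b ∈ Finset.Icc 1 (2 * k), Complex.exp (c * (lamB (2 * k) mh b : ℂ)) * p b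
        + ((sig mh (2 * k) : ℂ))⁻¹ := by
    rw [hU, Matrix.add_apply, Matrix.one_apply_ne hij, Matrix.sum_apply]
    have h2 : ∀ b ∈ Finset.Icc 1 (2 * k),
        ((Complex.exp (c * (lamB (2 * k) mh b : ℂ)) - 1) • PP (2 * k) mh b) i j
        = Complex.exp (c * (lamB (2 * k) mh b : ℂ)) * p b - p b := by
      intro b _
      rw [Matrix.smul_apply, smul_eq_mul, hPPij b]
      ring
    rw [Finset.sum_congr rfl h2, Finset.sum_sub_distrib, hps]
    ring
  have habs_exp : ∀ b : ℕ, ‖Complex.exp (c * (lamB (2 * k) mh b : ℂ))‖ = 1 := by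
    intro b
    have hrw : c * (lamB (2 * k) mh b : ℂ)
        = ((-(t * (lamB (2 * k) mh b : ℝ)) : ℝ) : ℂ) * Complex.I := by
      rw [hc]
      push_cast
      ring
    rw [hrw, Complex.norm_exp_ofReal_mul_I]
  have habs_p : ∀ b ∈ Finset.Icc 1 (2 * k), ‖p b‖
      = (if b < B then 0 else if b = B then ((sig mh B : ℝ))⁻¹
          else ((sig mh (b - 1) : ℝ))⁻¹ - ((sig mh b : ℝ))⁻¹) := by
    intro b hb
    have hb' := Finset.mem_Icc.mp hb
    have hpb : p b = ((sig mh (b - 1) : ℂ))⁻¹ * (if B ≤ b - 1 then 1 else 0)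
        - ((sig mh b : ℂ))⁻¹ * (if B ≤ b then 1 else 0) := by rw [hp]
    rcases Nat.lt_trichotomy b B with h | h | h
    · rw [if_pos h, hpb]
      rw [if_neg (by omega), if_neg (by omega)]
      simp
    · rw [if_neg (by omega), if_pos h, hpb]
      rw [if_neg (by omega), if_pos (by omega), mul_one, mul_zero, zero_sub, norm_neg,
        norm_inv, Complex.norm_natCast, h]
    · rw [if_neg (by omega), if_neg (by omega), hpb]
      rw [if_pos (by omega), if_pos (by omega), mul_one, mul_one]
      have hcast : ((sig mh (b - 1) : ℂ))⁻¹ - ((sig mh b : ℂ))⁻¹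
          = ((((sig mh (b - 1) : ℝ))⁻¹ - ((sig mh b : ℝ))⁻¹ : ℝ) : ℂ) := by
        push_cast
        ring
      rw [hcast, Complex.norm_real, Real.norm_eq_abs]
      have hpos : (0 : ℝ) < (sig mh (b - 1) : ℝ) := by
        have := sig_pos mh h1 (show 1 ≤ b - 1 by omega)
        exact_mod_cast Nat.lt_of_lt_of_le Nat.zero_lt_one this
      have hmon : (sig mh (b - 1) : ℝ) ≤ (sig mh b : ℝ) := by
        exact_mod_cast sig_mono mh (Nat.sub_le b 1)
      have hle : ((sig mh b : ℝ))⁻¹ ≤ ((sig mh (b - 1) : ℝ))⁻¹ := by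
        gcongr
      rw [abs_of_nonneg (by linarith)]
  have hsum_abs : ∑ b ∈ Finset.Icc 1 (2 * k), ‖p b‖
      = 2 * ((sig mh B : ℝ))⁻¹ - ((sig mh (2 * k) : ℝ))⁻¹ := by
    rw [Finset.sum_congr rfl habs_p]
    rw [show Finset.Icc 1 (2 * k) = Finset.Ioc 0 (2 * k) from (Finset.Icc_add_one_left_eq_Ioc 0 (2 * k)),
      ← Finset.sum_Ioc_consecutive _ (Nat.zero_le B) hBr]
    have hfirst : ∑ b ∈ Finset.Ioc 0 B, (if b < B then (0:ℝ)
        else if b = B then ((sig mh B : ℝ))⁻¹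
        else ((sig mh (b - 1) : ℝ))⁻¹ - ((sig mh b : ℝ))⁻¹) = ((sig mh B : ℝ))⁻¹ := by
      rw [Finset.sum_eq_single_of_mem B (Finset.mem_Ioc.mpr ⟨by omega, le_rfl⟩)]
      · rw [if_neg (by omega), if_pos rfl]
      · intro b hb hbB
        have hb' := Finset.mem_Ioc.mp hb
        rw [if_pos (by omega)]
    have hsecond : ∑ b ∈ Finset.Ioc B (2 * k), (if b < B then (0:ℝ)
        else if b = B then ((sig mh B : ℝ))⁻¹
        else ((sig mh (b - 1) : ℝ))⁻¹ - ((sig mh b : ℝ))⁻¹)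
        = ((sig mh B : ℝ))⁻¹ - ((sig mh (2 * k) : ℝ))⁻¹ := by
      rw [← Finset.Icc_add_one_left_eq_Ioc]
      have hcongr : ∀ b ∈ Finset.Icc (B + 1) (2 * k),
          (if b < B then (0:ℝ) else if b = B then ((sig mh B : ℝ))⁻¹
            else ((sig mh (b - 1) : ℝ))⁻¹ - ((sig mh b : ℝ))⁻¹)
          = ((fun x => ((sig mh x : ℝ))⁻¹) (b - 1) - (fun x => ((sig mh x : ℝ))⁻¹) b) := by
        intro b hb
        have hb' := Finset.mem_Icc.mp hb
        rw [if_neg (by omega), if_neg (by omega)]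
      rw [Finset.sum_congr rfl hcongr, telescope (fun x => ((sig mh x : ℝ))⁻¹) hBr]
    rw [hfirst, hsecond]
    ring
  have hbound : ‖Ut (GammaEven (2 * k) mh) t i j‖ ≤ 2 * ((sig mh B : ℝ))⁻¹ := by
    rw [hentry]
    calc ‖∑ b ∈ Finset.Icc 1 (2 * k),
            Complex.exp (c * (lamB (2 * k) mh b : ℂ)) * p b + ((sig mh (2 * k) : ℂ))⁻¹‖
        ≤ ‖∑ b ∈ Finset.Icc 1 (2 * k),
            Complex.exp (c * (lamB (2 * k) mh b : ℂ)) * p b‖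
          + ‖((sig mh (2 * k) : ℂ))⁻¹‖ := norm_add_le _ _
      _ ≤ (∑ b ∈ Finset.Icc 1 (2 * k),
            ‖Complex.exp (c * (lamB (2 * k) mh b : ℂ)) * p b‖)
          + ‖((sig mh (2 * k) : ℂ))⁻¹‖ := by
          gcongr
          exact norm_sum_le _ _
      _ = (∑ b ∈ Finset.Icc 1 (2 * k), ‖p b‖) + ((sig mh (2 * k) : ℝ))⁻¹ := by
          rw [norm_inv, Complex.norm_natCast]
          congr 1
          refine Finset.sum_congr rfl fun b _ => ?_
          rw [norm_mul, habs_exp b, one_mul]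
      _ = 2 * ((sig mh B : ℝ))⁻¹ := by
          rw [hsum_abs]
          ring
  refine le_trans hbound ?_
  have hs2 : sig mh 2 = m 2 + 1 := by
    have h2 := sig_succ mh 1
    norm_num at h2
    rw [sig_one, h1] at h2
    have hmha : mh 2 = m 2 := by rw [hmh 2]; norm_num
    omega
  have hmono : (sig mh 2 : ℝ) ≤ (sig mh B : ℝ) := by
    exact_mod_cast sig_mono mh hB2
  have hpos2 : (0 : ℝ) < (sig mh 2 : ℝ) := by
    have := sig_pos mh h1 (show (1:ℕ) ≤ 2 by omega)
    exact_mod_cast Nat.lt_of_lt_of_le Nat.zero_lt_one this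
  have hinv : ((sig mh B : ℝ))⁻¹ ≤ ((sig mh 2 : ℝ))⁻¹ := by gcongr
  calc 2 * ((sig mh B : ℝ))⁻¹ ≤ 2 * ((sig mh 2 : ℝ))⁻¹ := by linarith
    _ = 2 / ((m 2 : ℝ) + 1) := by
        rw [hs2]
        push_cast
        rw [div_eq_mul_inv]
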